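/- For every natural number n ≥ 1 and integer k with 0 ≤ k ≤ 2n−1, ∑_{l=0}^{n-1} sec(πl/(2n))·cos((2k+1)lπ/(2n)) = (−1)^k·(n − 2·⌊(k+1)/2⌋). -/

import Mathlib

open Real Finset

/-- Ratio identity: `cos((2k+1)θ)/cos θ` as a cosine polynomial. -/
lemma ratio_lemma (θ : ℝ) (hθ : Real.cos θ ≠ 0) (k : ℕ) :
    (Real.cos θ)⁻¹ * Real.cos ((2 * k + 1) * θ) =
      (-1 : ℝ) ^ k +
        2 * ∑ j ∈ Finset.range k, (-1 : ℝ) ^ (k + j + 1) * Real.cos (2 * (j + 1) * θ) := by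
  induction k with
  | zero => simp [inv_mul_cancel₀ hθ]
  | succ k ih =>
    have hrec : Real.cos ((2 * (k + 1 : ℕ) + 1) * θ) =
        2 * Real.cos (2 * ((k : ℝ) + 1) * θ) * Real.cos θ - Real.cos ((2 * k + 1) * θ) := by
      have h := Real.cos_add_cos ((2 * (k : ℝ) + 3) * θ) ((2 * (k : ℝ) + 1) * θ)
      have e1 : ((2 * (k : ℝ) + 3) * θ + (2 * (k : ℝ) + 1) * θ) / 2 = 2 * ((k : ℝ) + 1) * θ := by
        ring
      have e2 : ((2 * (k : ℝ) + 3) * θ - (2 * (k : ℝ) + 1) * θ) / 2 = θ := by ring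
      rw [e1, e2] at h
      have e3 : (2 * ((k + 1 : ℕ) : ℝ) + 1) * θ = (2 * (k : ℝ) + 3) * θ := by push_cast; ring
      rw [e3]
      linarith
    rw [hrec]
    have h1 : (Real.cos θ)⁻¹ * (2 * Real.cos (2 * ((k : ℝ) + 1) * θ) * Real.cos θ
        - Real.cos ((2 * k + 1) * θ)) =
        2 * Real.cos (2 * ((k : ℝ) + 1) * θ) - (Real.cos θ)⁻¹ * Real.cos ((2 * k + 1) * θ) := by
      field_simp
    rw [h1, ih, Finset.sum_range_succ]
    have h2 : ∀ j ∈ Finset.range k,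
        (-1 : ℝ) ^ (k + 1 + j + 1) * Real.cos (2 * ((j : ℝ) + 1) * θ) =
        -((-1 : ℝ) ^ (k + j + 1) * Real.cos (2 * ((j : ℝ) + 1) * θ)) := by
      intro j _
      have : (k + 1 + j + 1) = (k + j + 1) + 1 := by omega
      rw [this, pow_succ]
      ring
    rw [Finset.sum_congr rfl h2, Finset.sum_neg_distrib]
    have h3 : (-1 : ℝ) ^ (k + 1 + k + 1) = 1 := by
      have : k + 1 + k + 1 = 2 * (k + 1) := by omega
      rw [this, pow_mul]
      norm_num
    rw [h3]
    push_cast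
    ring

/-- Cosine sum over `l < n` of `cos (j l π / n)` for `1 ≤ j ≤ 2n - 1`. -/
lemma cos_sum_lemma (n j : ℕ) (hn : 1 ≤ n) (hj1 : 1 ≤ j) (hj2 : j ≤ 2 * n - 1) :
    ∑ l ∈ Finset.range n, Real.cos ((j : ℝ) * l * π / n) =
      if j % 2 = 1 then 1 else 0 := by
  have hnpos : (0 : ℝ) < n := by exact_mod_cast hn
  set s : ℝ := Real.sin ((j : ℝ) * π / (2 * n)) with hs
  have hspos : 0 < s := by
    apply Real.sin_pos_of_pos_of_lt_pi
    · positivity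
    · rw [div_lt_iff₀ (by positivity)]
      have hj2n : (j : ℝ) < 2 * n := by
        have : j < 2 * n := by omega
        exact_mod_cast this
      nlinarith [Real.pi_pos]
  set f : ℕ → ℝ := fun l => Real.sin ((2 * (l : ℝ) - 1) * ((j : ℝ) * π / n) / 2) with hf
  have key : ∀ l : ℕ, f (l + 1) - f l = 2 * s * Real.cos ((j : ℝ) * l * π / n) := by
    intro l
    simp only [hf]
    rw [Real.sin_sub_sin]
    have e1 : ((2 * ((l : ℝ) + 1) - 1) * ((j : ℝ) * π / n) / 2
        - (2 * (l : ℝ) - 1) * ((j : ℝ) * π / n) / 2) / 2 = (j : ℝ) * π / (2 * n) := by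
      have hne : (n : ℝ) ≠ 0 := ne_of_gt hnpos
      field_simp
      ring
    have e2 : ((2 * ((l : ℝ) + 1) - 1) * ((j : ℝ) * π / n) / 2
        + (2 * (l : ℝ) - 1) * ((j : ℝ) * π / n) / 2) / 2 = (j : ℝ) * l * π / n := by
      have hne : (n : ℝ) ≠ 0 := ne_of_gt hnpos
      field_simp
      ring
    push_cast
    rw [e1, e2]
  have tele : ∑ l ∈ Finset.range n, (f (l + 1) - f l) = f n - f 0 :=
    Finset.sum_range_sub f n
  have sum_eq : 2 * s * ∑ l ∈ Finset.range n, Real.cos ((j : ℝ) * l * π / n)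
      = f n - f 0 := by
    rw [← tele, Finset.mul_sum]
    exact Finset.sum_congr rfl fun l _ => (key l).symm
  have hfn : f n = (-1 : ℝ) ^ (j + 1) * s := by
    simp only [hf]
    have e : (2 * (n : ℝ) - 1) * ((j : ℝ) * π / n) / 2 = (j : ℝ) * π - (j : ℝ) * π / (2 * n) := by
      have hne : (n : ℝ) ≠ 0 := ne_of_gt hnpos
      field_simp
      all_goals ring
    rw [e, Real.sin_nat_mul_pi_sub]
    rw [pow_succ]
    ring
  have hf0 : f 0 = -s := by
    simp only [hf]
    have e : (2 * ((0 : ℕ) : ℝ) - 1) * ((j : ℝ) * π / n) / 2 = -((j : ℝ) * π / (2 * n)) := by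
      push_cast
      field_simp
      ring
    rw [e, Real.sin_neg]
  rw [hfn, hf0] at sum_eq
  have hsne : s ≠ 0 := ne_of_gt hspos
  rcases Nat.even_or_odd j with hje | hjo
  · have : j % 2 = 0 := Nat.even_iff.mp hje
    rw [this]
    norm_num
    have hpow : (-1 : ℝ) ^ (j + 1) = -1 := by
      rw [pow_succ, hje.neg_one_pow]
      norm_num
    rw [hpow] at sum_eq
    have : 2 * s * ∑ l ∈ Finset.range n, Real.cos ((j : ℝ) * l * π / n) = 0 := by
      rw [sum_eq]; ring
    have h2s : 2 * s ≠ 0 := by positivity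
    exact (mul_eq_zero.mp this).resolve_left h2s
  · have : j % 2 = 1 := Nat.odd_iff.mp hjo
    rw [this]
    norm_num
    have hpow : (-1 : ℝ) ^ (j + 1) = 1 := by
      rw [pow_succ, hjo.neg_one_pow]
      norm_num
    rw [hpow] at sum_eq
    have h2s : 2 * s ≠ 0 := by positivity
    field_simp at sum_eq ⊢
    rw [Finset.sum_congr rfl (fun x _ => by rw [show (j : ℝ) * π * x / n = j * x * π / n by ring])]
    linarith

/-- Counting even numbers below `k`. -/
lemma count_even (k : ℕ) :
    ∑ j ∈ Finset.range k, (if j % 2 = 0 then (1 : ℝ) else 0) = ((k + 1) / 2 : ℕ) := by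
  induction k with
  | zero => simp
  | succ k ih =>
    rw [Finset.sum_range_succ, ih]
    rcases Nat.even_or_odd k with hke | hko
    · have h1 : k % 2 = 0 := Nat.even_iff.mp hke
      have h2 : (k + 1 + 1) / 2 = (k + 1) / 2 + 1 := by omega
      rw [h1, h2]
      push_cast
      norm_num
    · have h1 : k % 2 = 1 := Nat.odd_iff.mp hko
      have h2 : (k + 1 + 1) / 2 = (k + 1) / 2 := by omega
      rw [h1, h2]
      norm_num

theorem sec_cos_sum (n k : ℕ) (hn : 1 ≤ n) (hk : k ≤ 2 * n - 1) :
    ∑ l ∈ Finset.range n,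
      (Real.cos (π * l / (2 * n)))⁻¹ * Real.cos ((2 * k + 1) * l * π / (2 * n)) =
    (-1 : ℝ) ^ k * ((n : ℝ) - 2 * ((k + 1) / 2 : ℕ)) := by
  have hnpos : (0 : ℝ) < n := by exact_mod_cast hn
  have hcos : ∀ l ∈ Finset.range n, Real.cos (π * l / (2 * n)) ≠ 0 := by
    intro l hl
    rw [Finset.mem_range] at hl
    apply ne_of_gt
    apply Real.cos_pos_of_mem_Ioo
    constructor
    · have : (0 : ℝ) ≤ π * l / (2 * n) := by positivity
      linarith [Real.pi_pos]
    · rw [div_lt_iff₀ (by positivity)]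
      have hln : (l : ℝ) < n := by exact_mod_cast hl
      nlinarith [Real.pi_pos]
  -- rewrite each term using the ratio lemma
  have step1 : ∀ l ∈ Finset.range n,
      (Real.cos (π * l / (2 * n)))⁻¹ * Real.cos ((2 * k + 1) * l * π / (2 * n)) =
      (-1 : ℝ) ^ k + 2 * ∑ j ∈ Finset.range k,
        (-1 : ℝ) ^ (k + j + 1) * Real.cos (((j : ℝ) + 1) * l * π / n) := by
    intro l hl
    have h := ratio_lemma (π * l / (2 * n)) (hcos l hl) k
    have e1 : ((2 * (k : ℝ) + 1) * (π * l / (2 * n))) = (2 * k + 1) * l * π / (2 * n) := by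
      ring
    rw [e1] at h
    rw [h]
    congr 1
    congr 1
    apply Finset.sum_congr rfl
    intro j _
    congr 1
    field_simp
  rw [Finset.sum_congr rfl step1, Finset.sum_add_distrib, Finset.sum_const,
    Finset.card_range, nsmul_eq_mul]
  have step2 : ∑ l ∈ Finset.range n, (2 * ∑ j ∈ Finset.range k,
      (-1 : ℝ) ^ (k + j + 1) * Real.cos (((j : ℝ) + 1) * l * π / n)) =
      2 * ∑ j ∈ Finset.range k, ∑ l ∈ Finset.range n,
      (-1 : ℝ) ^ (k + j + 1) * Real.cos (((j : ℝ) + 1) * l * π / n) := by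
    rw [← Finset.mul_sum, Finset.sum_comm]
  rw [step2]
  have inner : ∀ j ∈ Finset.range k,
      ∑ l ∈ Finset.range n, (-1 : ℝ) ^ (k + j + 1) * Real.cos (((j : ℝ) + 1) * l * π / n) =
      (-1 : ℝ) ^ (k + 1) * (if j % 2 = 0 then (1 : ℝ) else 0) := by
    intro j hj
    rw [← Finset.mul_sum]
    have hjk : j < k := Finset.mem_range.mp hj
    have hcs := cos_sum_lemma n (j + 1) hn (by omega) (by omega)
    push_cast at hcs
    rw [hcs]
    have hmod : (j + 1) % 2 = 1 ↔ j % 2 = 0 := by omega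
    rcases Nat.even_or_odd j with hje | hjo
    · have h0 : j % 2 = 0 := Nat.even_iff.mp hje
      have h1 : (j + 1) % 2 = 1 := by omega
      rw [h0, h1]
      have : (-1 : ℝ) ^ (k + j + 1) = (-1 : ℝ) ^ (k + 1) := by
        have e : k + j + 1 = (k + 1) + j := by omega
        rw [e, pow_add, hje.neg_one_pow, mul_one]
      rw [this]
      norm_num
    · have h0 : j % 2 = 1 := Nat.odd_iff.mp hjo
      have h1 : (j + 1) % 2 = 0 := by omega
      rw [h0, h1]
      norm_num
  rw [Finset.sum_congr rfl inner, ← Finset.mul_sum, count_even]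
  rw [pow_succ]
  ring
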